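/- Let S ⊆ ℝ^n be nonempty, convex and compact, A : ℝ^n → ℝ^s linear, r > 0, and let g : ℝ^s → ℝ ∪ {+∞} be proper, convex and lower semicontinuous such that the set K_r := {z ∈ ℝ^s : dist(z, A(S)) ≤ r} is contained in int(dom g) and g is Lipschitz continuous on K_r with constant ℓ > 0. Let α > 0 with αℓ < r, let (α_k)_{k≥0} be positive reals, let (b^k)_{k≥0} be a sequence in A(S), and let (z^k)_{k≥0} be a sequence in ℝ^s with ‖z^0‖ ≤ ℓ such that, for every k ≥ 0, z^{k+1} is a minimizer over ℝ^s of z ↦ g*(z) − ⟨b^k + α z^k, z⟩ + (α_k/2)‖z‖². Then ‖z^k‖ ≤ ℓ for all k ≥ 0. -/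

import Mathlib

set_option maxHeartbeats 1000000

open RealInnerProductSpace

theorem exists_subgradient_aux {s : ℕ} (g : EuclideanSpace ℝ (Fin s) → EReal)
    (hbot : ∀ v, g v ≠ ⊥)
    (hconv : ∀ v w : EuclideanSpace ℝ (Fin s), ∀ a b : ℝ, 0 ≤ a → 0 ≤ b → a + b = 1 →
      g (a • v + b • w) ≤ (a : EReal) * g v + (b : EReal) * g w)
    (c : EuclideanSpace ℝ (Fin s)) (ρ ℓ : ℝ) (hρ : 0 < ρ) (hℓ : 0 ≤ ℓ)
    (gc : ℝ) (hgc : g c = (gc : EReal))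
    (hlip : ∀ x y : EuclideanSpace ℝ (Fin s), ‖x - c‖ ≤ ρ → ‖y - c‖ ≤ ρ →
      g x ≤ g y + ((ℓ * ‖x - y‖ : ℝ) : EReal)) :
    ∃ w : EuclideanSpace ℝ (Fin s), ‖w‖ ≤ ℓ ∧
      ∀ x, ((⟪w, x⟫ : ℝ) : EReal) - g x ≤ ((⟪w, c⟫ - gc : ℝ) : EReal) := by
  classical
  have hcc : ‖c - c‖ ≤ ρ := by simpa using hρ.le
  -- finiteness on the ball
  have hfin : ∀ x : EuclideanSpace ℝ (Fin s), ‖x - c‖ ≤ ρ → g x ≠ ⊤ := by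
    intro x hx
    have h := hlip x c hx hcc
    rw [hgc, ← EReal.coe_add] at h
    intro htop
    rw [htop] at h
    exact EReal.coe_ne_top _ (top_le_iff.mp h)
  set f : EuclideanSpace ℝ (Fin s) → ℝ := fun x => (g x).toReal with hf
  have hgf : ∀ x, ‖x - c‖ ≤ ρ → g x = ((f x : ℝ) : EReal) := by
    intro x hx
    exact (EReal.coe_toReal (hfin x hx) (hbot x)).symm
  have hfc : f c = gc := by
    have h := hgf c hcc
    rw [hgc] at h
    exact_mod_cast h.symm
  -- real Lipschitz on the ball
  have hflip : ∀ x y, ‖x - c‖ ≤ ρ → ‖y - c‖ ≤ ρ → f x ≤ f y + ℓ * ‖x - y‖ := by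
    intro x y hx hy
    have h := hlip x y hx hy
    rw [hgf x hx, hgf y hy, ← EReal.coe_add] at h
    exact_mod_cast h
  -- convex combinations stay in the ball
  have hcomb : ∀ (x y : EuclideanSpace ℝ (Fin s)) (a b : ℝ), 0 ≤ a → 0 ≤ b → a + b = 1 →
      a • x + b • y - c = a • (x - c) + b • (y - c) := by
    intro x y a b _ _ hab
    have hc : a • c + b • c = c := by rw [← add_smul, hab, one_smul]
    have h1 : a • (x - c) + b • (y - c) = a • x + b • y - (a • c + b • c) := by
      rw [smul_sub, smul_sub]; abel
    rw [hc] at h1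
    exact h1.symm
  have hcombn : ∀ (x y : EuclideanSpace ℝ (Fin s)) (a b : ℝ), 0 ≤ a → 0 ≤ b → a + b = 1 →
      ‖x - c‖ ≤ ρ → ‖y - c‖ ≤ ρ → ‖a • x + b • y - c‖ ≤ ρ := by
    intro x y a b ha hb hab hx hy
    rw [hcomb x y a b ha hb hab]
    calc ‖a • (x - c) + b • (y - c)‖ ≤ a * ‖x - c‖ + b * ‖y - c‖ := by
          refine (norm_add_le _ _).trans ?_
          rw [norm_smul, norm_smul, Real.norm_eq_abs, Real.norm_eq_abs,
            abs_of_nonneg ha, abs_of_nonneg hb]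
      _ ≤ a * ρ + b * ρ :=
          add_le_add (mul_le_mul_of_nonneg_left hx ha) (mul_le_mul_of_nonneg_left hy hb)
      _ = ρ := by rw [← add_mul, hab, one_mul]
  -- real convexity of f on the ball
  have hfconv : ∀ (x y : EuclideanSpace ℝ (Fin s)) (a b : ℝ), 0 ≤ a → 0 ≤ b → a + b = 1 →
      ‖x - c‖ ≤ ρ → ‖y - c‖ ≤ ρ → f (a • x + b • y) ≤ a * f x + b * f y := by
    intro x y a b ha hb hab hx hy
    have hcv := hconv x y a b ha hb hab
    rw [hgf x hx, hgf y hy, hgf _ (hcombn x y a b ha hb hab hx hy),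
      ← EReal.coe_mul, ← EReal.coe_mul, ← EReal.coe_add] at hcv
    exact_mod_cast hcv
  -- the open convex set T (strict epigraph over the open ball)
  set T : Set ((EuclideanSpace ℝ (Fin s)) × ℝ) := {p | ‖p.1 - c‖ < ρ ∧ f p.1 < p.2} with hT
  have hTopen : IsOpen T := by
    have hK : LipschitzOnWith ⟨ℓ, hℓ⟩ f (Metric.closedBall c ρ) := by
      apply LipschitzOnWith.of_dist_le_mul
      intro x hx y hy
      rw [Metric.mem_closedBall, dist_eq_norm] at hx hy
      rw [Real.dist_eq, abs_sub_le_iff, dist_eq_norm]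
      have e : ‖y - x‖ = ‖x - y‖ := norm_sub_rev y x
      have h1 := hflip x y hx hy
      have h2 := hflip y x hy hx
      rw [e] at h2
      constructor <;> · show _ ≤ ℓ * ‖x - y‖; linarith
    have hcont : ContinuousOn (fun p : (EuclideanSpace ℝ (Fin s)) × ℝ => f p.1 - p.2)
        ((Metric.ball c ρ) ×ˢ (Set.univ : Set ℝ)) := by
      apply ContinuousOn.sub
      · exact ((hK.mono Metric.ball_subset_closedBall).continuousOn.comp
          continuous_fst.continuousOn (fun p hp => hp.1))
      · exact continuous_snd.continuousOn
    have ho := hcont.isOpen_inter_preimage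
      ((Metric.isOpen_ball).prod isOpen_univ) (isOpen_Iio (a := (0:ℝ)))
    convert ho using 1
    ext p
    simp only [hT, Set.mem_setOf_eq, Set.mem_inter_iff, Set.mem_prod, Metric.mem_ball,
      dist_eq_norm, Set.mem_univ, and_true, Set.mem_preimage, Set.mem_Iio, sub_neg]
  have hTconv : Convex ℝ T := by
    rintro p hp q hq a b ha hb hab
    have hp' : ‖p.1 - c‖ < ρ ∧ f p.1 < p.2 := hp
    have hq' : ‖q.1 - c‖ < ρ ∧ f q.1 < q.2 := hq
    have h1 : (a • p + b • q).1 = a • p.1 + b • q.1 := rfl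
    have h2 : (a • p + b • q).2 = a * p.2 + b * q.2 := rfl
    constructor
    · show ‖(a • p + b • q).1 - c‖ < ρ
      rw [h1, hcomb _ _ a b ha hb hab]
      calc ‖a • (p.1 - c) + b • (q.1 - c)‖ ≤ a * ‖p.1 - c‖ + b * ‖q.1 - c‖ := by
            refine (norm_add_le _ _).trans ?_
            rw [norm_smul, norm_smul, Real.norm_eq_abs, Real.norm_eq_abs,
              abs_of_nonneg ha, abs_of_nonneg hb]
        _ < ρ := by
            rcases eq_or_lt_of_le ha with ha0 | ha0
            · have hb1 : b = 1 := by linarith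
              rw [← ha0, hb1]; simpa using hq'.1
            · rcases eq_or_lt_of_le hb with hb0 | hb0
              · have ha1 : a = 1 := by linarith
                rw [← hb0, ha1]; simpa using hp'.1
              · have := add_lt_add (mul_lt_mul_of_pos_left hp'.1 ha0)
                  (mul_lt_mul_of_pos_left hq'.1 hb0)
                calc a * ‖p.1 - c‖ + b * ‖q.1 - c‖ < a * ρ + b * ρ := this
                  _ = ρ := by rw [← add_mul, hab, one_mul]
    · show f (a • p + b • q).1 < (a • p + b • q).2
      rw [h1, h2]
      have := hfconv p.1 q.1 a b ha hb hab hp'.1.le hq'.1.le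
      have h3 : a * f p.1 + b * f q.1 ≤ a * p.2 + b * q.2 := by
        rcases eq_or_lt_of_le ha with ha0 | ha0
        · have hb1 : b = 1 := by linarith
          rw [← ha0, hb1]; simpa using hq'.2.le
        · rcases eq_or_lt_of_le hb with hb0 | hb0
          · have ha1 : a = 1 := by linarith
            rw [← hb0, ha1]; simpa using hp'.2.le
          · exact (add_lt_add (mul_lt_mul_of_pos_left hp'.2 ha0)
              (mul_lt_mul_of_pos_left hq'.2 hb0)).le
      rcases eq_or_lt_of_le ha with ha0 | ha0
      · have hb1 : b = 1 := by linarith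
        have := hq'.2
        calc f (a • p.1 + b • q.1) ≤ a * f p.1 + b * f q.1 :=
              hfconv p.1 q.1 a b ha hb hab hp'.1.le hq'.1.le
          _ < a * p.2 + b * q.2 := by rw [← ha0, hb1]; simpa using hq'.2
      · calc f (a • p.1 + b • q.1) ≤ a * f p.1 + b * f q.1 :=
              hfconv p.1 q.1 a b ha hb hab hp'.1.le hq'.1.le
          _ < a * p.2 + b * q.2 := by
            have h4 : a * f p.1 < a * p.2 := mul_lt_mul_of_pos_left hp'.2 ha0
            have h5 : b * f q.1 ≤ b * q.2 := mul_le_mul_of_nonneg_left hq'.2.le hb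
            linarith
  -- separation
  have hnotmem : (c, gc) ∉ T := by
    intro h
    exact absurd h.2 (by rw [hfc]; exact lt_irrefl gc)
  obtain ⟨φ, hφ⟩ := geometric_hahn_banach_open_point hTconv hTopen hnotmem
  -- decompose φ
  set β : ℝ := φ ((0 : EuclideanSpace ℝ (Fin s)), (1 : ℝ)) with hβ
  have hφadd : ∀ (x : EuclideanSpace ℝ (Fin s)) (t : ℝ), φ (x, t) = φ (x, 0) + t * β := by
    intro x t
    have hxt : ((x, t) : (EuclideanSpace ℝ (Fin s)) × ℝ)
        = (x, (0:ℝ)) + t • ((0 : EuclideanSpace ℝ (Fin s)), (1:ℝ)) := by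
      simp [Prod.ext_iff]
    rw [hxt, map_add, map_smul, smul_eq_mul, hβ]
  have hβneg : β < 0 := by
    have hmem : ((c, gc + 1) : (EuclideanSpace ℝ (Fin s)) × ℝ) ∈ T := by
      refine ⟨by simpa using hρ, ?_⟩
      show f c < gc + 1
      rw [hfc]; linarith
    have h := hφ _ hmem
    rw [hφadd c (gc+1), hφadd c gc] at h
    linarith
  have hβpos : 0 < -β := by linarith
  set w : EuclideanSpace ℝ (Fin s) :=
    (InnerProductSpace.toDual ℝ (EuclideanSpace ℝ (Fin s))).symm
      ((-β)⁻¹ • (φ.comp (ContinuousLinearMap.inl ℝ (EuclideanSpace ℝ (Fin s)) ℝ))) with hw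
  have hwx : ∀ x : EuclideanSpace ℝ (Fin s), ⟪w, x⟫ = (-β)⁻¹ * φ (x, 0) := by
    intro x
    rw [hw, InnerProductSpace.toDual_symm_apply]
    simp
  -- local subgradient inequality on the open ball
  have hloc : ∀ x : EuclideanSpace ℝ (Fin s), ‖x - c‖ < ρ →
      ⟪w, x⟫ - ⟪w, c⟫ ≤ f x - gc := by
    intro x hx
    have key : ∀ ε : ℝ, 0 < ε → ⟪w, x⟫ - ⟪w, c⟫ ≤ f x - gc + ε := by
      intro ε hε
      have hmem : ((x, f x + ε) : (EuclideanSpace ℝ (Fin s)) × ℝ) ∈ T :=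
        ⟨hx, by show f x < f x + ε; linarith⟩
      have h := hφ _ hmem
      rw [hφadd x (f x + ε), hφadd c gc] at h
      rw [hwx x, hwx c]
      have hγβ : (-β)⁻¹ * (-β) = 1 := inv_mul_cancel₀ (ne_of_gt hβpos)
      have h2 : φ (x, 0) - φ (c, 0) ≤ (f x + ε - gc) * (-β) := by nlinarith
      have h3 := mul_le_mul_of_nonneg_left h2 (le_of_lt (inv_pos.mpr hβpos))
      rw [mul_sub, show (-β)⁻¹ * ((f x + ε - gc) * -β) = (f x + ε - gc) * ((-β)⁻¹ * -β) from
        by ring, hγβ, mul_one] at h3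
      linarith
    by_contra hcon
    push_neg at hcon
    have := key ((⟪w, x⟫ - ⟪w, c⟫ - (f x - gc)) / 2) (by linarith)
    linarith
  -- norm bound
  have hwnorm : ‖w‖ ≤ ℓ := by
    rcases eq_or_ne w 0 with h0 | h0
    · rw [h0]; simpa using hℓ
    · have hwpos : 0 < ‖w‖ := norm_pos_iff.mpr h0
      set t : ℝ := ρ / (2 * ‖w‖) with ht
      have htpos : 0 < t := by positivity
      have hx : ‖(c + t • w) - c‖ = ρ / 2 := by
        rw [show c + t • w - c = t • w by abel, norm_smul, Real.norm_eq_abs,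
          abs_of_pos htpos, ht]
        field_simp
      have h1 := hloc (c + t • w) (by rw [hx]; linarith)
      have h2 : f (c + t • w) ≤ gc + ℓ * (ρ/2) := by
        have h := hflip (c + t • w) c (by rw [hx]; linarith) hcc
        rw [hfc, hx] at h
        exact h
      have h3 : ⟪w, c + t • w⟫ - ⟪w, c⟫ = t * ‖w‖^2 := by
        rw [inner_add_right, real_inner_smul_right, real_inner_self_eq_norm_sq]
        ring
      have h4 : t * ‖w‖^2 ≤ ℓ * (ρ/2) := by
        rw [← h3]; linarith
      rw [ht] at h4
      have h5 : ρ / (2 * ‖w‖) * ‖w‖^2 = (ρ/2) * ‖w‖ := by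
        field_simp
      rw [h5] at h4
      nlinarith
  -- global subgradient inequality
  refine ⟨w, hwnorm, ?_⟩
  intro x
  rcases eq_or_ne (g x) ⊤ with htop | htop
  · rw [htop, EReal.sub_top]
    exact bot_le
  · have hgx : g x = (((g x).toReal : ℝ) : EReal) := (EReal.coe_toReal htop (hbot x)).symm
    set fx : ℝ := (g x).toReal with hfx
    rw [hgx, ← EReal.coe_sub, EReal.coe_le_coe_iff]
    set t : ℝ := ρ / (ρ + ‖x - c‖ + 1) with ht
    have hnn : (0:ℝ) ≤ ‖x - c‖ := norm_nonneg _
    have htpos : 0 < t := by positivity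
    have ht1 : t ≤ 1 := by
      rw [ht, div_le_one (by positivity)]
      linarith
    have htx : t * ‖x - c‖ < ρ := by
      rw [ht, div_mul_eq_mul_div, div_lt_iff₀ (by positivity)]
      nlinarith
    set p : EuclideanSpace ℝ (Fin s) := (1 - t) • c + t • x with hp
    have hpc : p - c = t • (x - c) := by
      rw [hp, hcomb c x (1-t) t (by linarith) htpos.le (by ring)]
      simp
    have hpball : ‖p - c‖ < ρ := by
      rw [hpc, norm_smul, Real.norm_eq_abs, abs_of_pos htpos]
      exact htx
    have hcv := hconv c x (1-t) t (by linarith) htpos.le (by ring)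
    rw [hgc, hgx, hgf _ hpball.le, ← EReal.coe_mul, ← EReal.coe_mul, ← EReal.coe_add,
      EReal.coe_le_coe_iff] at hcv
    have hl := hloc p hpball
    have hip : ⟪w, p⟫ - ⟪w, c⟫ = t * (⟪w, x⟫ - ⟪w, c⟫) := by
      have h4 : ⟪w, p - c⟫ = t * ⟪w, x - c⟫ := by rw [hpc, real_inner_smul_right]
      rw [inner_sub_right, inner_sub_right] at h4
      exact h4
    rw [hip] at hl
    have hfin2 : t * (⟪w, x⟫ - ⟪w, c⟫) ≤ t * (fx - gc) := by
      calc t * (⟪w, x⟫ - ⟪w, c⟫) ≤ f p - gc := hl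
        _ ≤ (1-t) * gc + t * fx - gc := by linarith
        _ = t * (fx - gc) := by ring
    have := (mul_le_mul_iff_right₀ htpos).mp hfin2
    linarith



/-- (Boundedness of the dual iterates.)  If `g` is proper, convex and lsc,
Lipschitz with constant `ℓ` on the `r`-enlargement `K_r` of `A(S)` which lies inside
`int (dom g)`, `αℓ < r`, `‖z⁰‖ ≤ ℓ`, and every `z^{k+1}` is a minimizer of
`z ↦ g*(z) − ⟨b^k + α z^k, z⟩ + (α_k/2)‖z‖²` with `b^k ∈ A(S)`, then `‖z^k‖ ≤ ℓ` for all
`k`. -/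
theorem stmt_11 (n s : ℕ)
    (S : Set (EuclideanSpace ℝ (Fin n)))
    (hSne : S.Nonempty) (hSconv : Convex ℝ S) (hScomp : IsCompact S)
    (A : EuclideanSpace ℝ (Fin n) →L[ℝ] EuclideanSpace ℝ (Fin s))
    (r : ℝ) (hr : 0 < r)
    (g : EuclideanSpace ℝ (Fin s) → EReal)
    (hproper₁ : ∀ v, g v ≠ ⊥) (hproper₂ : ∃ v, g v ≠ ⊤)
    (hconv : ∀ v w : EuclideanSpace ℝ (Fin s), ∀ a b : ℝ, 0 ≤ a → 0 ≤ b → a + b = 1 →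
      g (a • v + b • w) ≤ (a : EReal) * g v + (b : EReal) * g w)
    (hlsc : LowerSemicontinuous g)
    (hKr : {v : EuclideanSpace ℝ (Fin s) | Metric.infDist v (A '' S) ≤ r} ⊆
      interior {v | g v ≠ ⊤})
    (ℓ : ℝ) (hℓ : 0 < ℓ)
    (hlip : ∀ v ∈ {v : EuclideanSpace ℝ (Fin s) | Metric.infDist v (A '' S) ≤ r},
      ∀ w ∈ {v : EuclideanSpace ℝ (Fin s) | Metric.infDist v (A '' S) ≤ r},
        g v ≤ g w + ((ℓ * ‖v - w‖ : ℝ) : EReal))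
    (α : ℝ) (hα : 0 < α) (hαℓ : α * ℓ < r)
    (αs : ℕ → ℝ) (hαs : ∀ k, 0 < αs k)
    (b : ℕ → EuclideanSpace ℝ (Fin s)) (hb : ∀ k, b k ∈ A '' S)
    (z : ℕ → EuclideanSpace ℝ (Fin s)) (hz0 : ‖z 0‖ ≤ ℓ)
    (hzmin : ∀ k, ∀ w : EuclideanSpace ℝ (Fin s),
      (⨆ v, ((⟪z (k + 1), v⟫ : ℝ) : EReal) - g v) +
        ((-⟪b k + α • z k, z (k + 1)⟫ + (αs k / 2) * ‖z (k + 1)‖ ^ 2 : ℝ) : EReal) ≤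
      (⨆ v, ((⟪w, v⟫ : ℝ) : EReal) - g v) +
        ((-⟪b k + α • z k, w⟫ + (αs k / 2) * ‖w‖ ^ 2 : ℝ) : EReal)) :
    ∀ k, ‖z k‖ ≤ ℓ := by
  set ρ : ℝ := r - α * ℓ with hρdef
  have hρ : 0 < ρ := by rw [hρdef]; linarith
  intro k
  induction k with
  | zero => exact hz0
  | succ k ih =>
    set c : EuclideanSpace ℝ (Fin s) := b k + α • z k with hc
    have hcb : ‖c - b k‖ = α * ‖z k‖ := by
      rw [hc, show b k + α • z k - b k = α • z k from by abel, norm_smul,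
        Real.norm_eq_abs, abs_of_pos hα]
    have hcK : Metric.infDist c (A '' S) ≤ α * ℓ := by
      calc Metric.infDist c (A '' S) ≤ dist c (b k) := Metric.infDist_le_dist_of_mem (hb k)
        _ = α * ‖z k‖ := by rw [dist_eq_norm, hcb]
        _ ≤ α * ℓ := mul_le_mul_of_nonneg_left ih hα.le
    have hball : ∀ x : EuclideanSpace ℝ (Fin s), ‖x - c‖ ≤ ρ →
        x ∈ {v : EuclideanSpace ℝ (Fin s) | Metric.infDist v (A '' S) ≤ r} := by
      intro x hx
      have h1 : Metric.infDist x (A '' S) ≤ Metric.infDist c (A '' S) + dist x c :=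
        Metric.infDist_le_infDist_add_dist
      have hd : dist x c = ‖x - c‖ := dist_eq_norm x c
      show Metric.infDist x (A '' S) ≤ r
      rw [hd] at h1
      have : α * ℓ + ρ = r := by rw [hρdef]; ring
      linarith
    have hKfin : ∀ x ∈ {v : EuclideanSpace ℝ (Fin s) | Metric.infDist v (A '' S) ≤ r},
        g x ≠ ⊤ := fun x hx => interior_subset (hKr hx)
    have hcKmem : c ∈ {v : EuclideanSpace ℝ (Fin s) | Metric.infDist v (A '' S) ≤ r} :=
      hball c (by simpa using hρ.le)
    set gc : ℝ := (g c).toReal with hgcdef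
    have hgc : g c = (gc : EReal) := (EReal.coe_toReal (hKfin c hcKmem) (hproper₁ c)).symm
    obtain ⟨w, hwℓ, hwsub⟩ := exists_subgradient_aux g hproper₁ hconv c ρ ℓ hρ hℓ.le gc hgc
      (fun x y hx hy => hlip x (hball x hx) y (hball y hy))
    have hsupw : (⨆ v, ((⟪w, v⟫ : ℝ) : EReal) - g v) = ((⟪w, c⟫ - gc : ℝ) : EReal) := by
      apply le_antisymm (iSup_le hwsub)
      have h := le_iSup (fun v => ((⟪w, v⟫ : ℝ) : EReal) - g v) c
      rw [hgc] at h
      exact h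
    have main := hzmin k w
    rw [← hc, hsupw] at main
    by_contra hcon
    push_neg at hcon
    have hζpos : 0 < ‖z (k+1)‖ := lt_trans hℓ hcon
    set ζ : EuclideanSpace ℝ (Fin s) := z (k + 1) with hζ
    set x₀ : EuclideanSpace ℝ (Fin s) := c + (ρ / ‖ζ‖) • ζ with hx₀
    have hx₀c : ‖x₀ - c‖ = ρ := by
      rw [hx₀, show c + (ρ / ‖ζ‖) • ζ - c = (ρ / ‖ζ‖) • ζ from by abel, norm_smul,
        Real.norm_eq_abs, abs_of_pos (by positivity)]
      field_simp
    have hgx₀ : g x₀ ≤ ((gc + ℓ * ρ : ℝ) : EReal) := by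
      have h := hlip x₀ (hball x₀ hx₀c.le) c hcKmem
      rw [hgc, hx₀c, ← EReal.coe_add] at h
      exact h
    have hinner : (⟪ζ, x₀⟫ : ℝ) = ⟪ζ, c⟫ + ρ * ‖ζ‖ := by
      rw [hx₀, inner_add_right, real_inner_smul_right, real_inner_self_eq_norm_sq]
      field_simp
    have hlb : ((⟪ζ, c⟫ + ρ * ‖ζ‖ - (gc + ℓ * ρ) : ℝ) : EReal) ≤
        ⨆ v, ((⟪ζ, v⟫ : ℝ) : EReal) - g v := by
      refine le_trans ?_ (le_iSup (fun v => ((⟪ζ, v⟫ : ℝ) : EReal) - g v) x₀)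
      show ((⟪ζ, c⟫ + ρ * ‖ζ‖ - (gc + ℓ * ρ) : ℝ) : EReal) ≤ ((⟪ζ, x₀⟫ : ℝ) : EReal) - g x₀
      rw [hinner, EReal.coe_sub]
      exact EReal.sub_le_sub (le_refl _) hgx₀
    have hchain : ((⟪ζ, c⟫ + ρ * ‖ζ‖ - (gc + ℓ * ρ) : ℝ) : EReal) +
          ((-⟪c, ζ⟫ + (αs k / 2) * ‖ζ‖ ^ 2 : ℝ) : EReal) ≤
        ((⟪w, c⟫ - gc : ℝ) : EReal) + ((-⟪c, w⟫ + (αs k / 2) * ‖w‖ ^ 2 : ℝ) : EReal) :=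
      le_trans (add_le_add_left hlb _) main
    rw [← EReal.coe_add, ← EReal.coe_add, EReal.coe_le_coe_iff] at hchain
    have hic : (⟪ζ, c⟫ : ℝ) = ⟪c, ζ⟫ := real_inner_comm _ _
    have hwc : (⟪w, c⟫ : ℝ) = ⟪c, w⟫ := real_inner_comm _ _
    have h1 : ‖w‖ ^ 2 ≤ ℓ ^ 2 := by nlinarith [norm_nonneg w]
    have h2 : ℓ ^ 2 < ‖ζ‖ ^ 2 := by nlinarith
    have h3 := mul_lt_mul_of_pos_left h2 (half_pos (hαs k))
    have h4 := mul_le_mul_of_nonneg_left h1 (half_pos (hαs k)).le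
    have h5 := mul_lt_mul_of_pos_left hcon hρ
    nlinarith [hchain]
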